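/- Let S be a nonempty finite type, let A and Q be row-stochastic real matrices indexed by S × S, let ρ : S → ℝ, and suppose the matrix powers Q^t converge entrywise as t → ∞ to the matrix whose (s, s') entry is ρ(s') (all rows equal to ρ). Then for every w : S → ℝ and every s ∈ S, the series Σ_{t=1}^∞ [ (A · Q^{t−1} · w)(s) − Σ_{s' ∈ S} ρ(s') w(s') ] converges absolutely (Proposition 1: the relative value function of an atomic action policy, defined as an infinite series of centered expected per-period rewards, is well defined). -/

import Mathlib

open Filter Finset Matrix

/-- A row-stochastic matrix. -/
def RowStochastic {S : Type*} [Fintype S] (P : Matrix S S ℝ) : Prop :=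
  (∀ s s', 0 ≤ P s s') ∧ ∀ s, ∑ s', P s s' = 1

lemma rs_mul {S : Type*} [Fintype S] {P R : Matrix S S ℝ} (hP : RowStochastic P)
    (hR : RowStochastic R) : RowStochastic (P * R) := by
  constructor
  · intro s s'
    exact Finset.sum_nonneg fun u _ => mul_nonneg (hP.1 s u) (hR.1 u s')
  · intro s
    simp only [Matrix.mul_apply]
    rw [Finset.sum_comm]
    calc ∑ u, ∑ s', P s u * R u s' = ∑ u, P s u * ∑ s', R u s' := by
          simp [Finset.mul_sum]
      _ = 1 := by simp [hR.2, hP.2 s]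

lemma rs_pow {S : Type*} [Fintype S] [DecidableEq S] {Q : Matrix S S ℝ} (hQ : RowStochastic Q) :
    ∀ t : ℕ, RowStochastic (Q ^ t) := by
  intro t
  induction t with
  | zero =>
    constructor
    · intro s s'; simp [Matrix.one_apply]; positivity
    · intro s; simp [Matrix.one_apply]
  | succ n ih =>
    rw [pow_succ]
    exact rs_mul ih hQ

lemma est1 {S : Type*} [Fintype S] {P : Matrix S S ℝ} (hP : RowStochastic P)
    (v : S → ℝ) (c B : ℝ) (hB : ∀ u, |v u - c| ≤ B) (s : S) :
    |(P *ᵥ v) s - c| ≤ B := by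
  have h1 : (P *ᵥ v) s - c = ∑ u, P s u * (v u - c) := by
    simp only [Matrix.mulVec, dotProduct, mul_sub]
    rw [Finset.sum_sub_distrib, ← Finset.sum_mul, hP.2 s, one_mul]
  rw [h1]
  calc |∑ u, P s u * (v u - c)| ≤ ∑ u, |P s u * (v u - c)| := Finset.abs_sum_le_sum_abs _ _
    _ ≤ ∑ u, P s u * B := by
        refine Finset.sum_le_sum fun u _ => ?_
        rw [abs_mul, abs_of_nonneg (hP.1 s u)]
        exact mul_le_mul_of_nonneg_left (hB u) (hP.1 s u)
    _ = B := by rw [← Finset.sum_mul, hP.2 s, one_mul]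

lemma est2 {S : Type*} [Fintype S] (P : Matrix S S ℝ) (ρ v : S → ℝ) (c B ε : ℝ) (s : S)
    (hP2 : ∑ u, P s u = 1) (hρ1 : ∑ u, ρ u = 1) (hc : ∑ u, ρ u * v u = c)
    (hB : ∀ u, |v u - c| ≤ B) (hB0 : 0 ≤ B) (hε : ∀ u, |P s u - ρ u| ≤ ε) :
    |(P *ᵥ v) s - c| ≤ (Fintype.card S : ℝ) * ε * B := by
  have key : (P *ᵥ v) s - c = ∑ u, (P s u - ρ u) * (v u - c) := by
    have e1 : ∑ u, (P s u - ρ u) * (v u - c)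
        = (∑ u, P s u * v u) - (∑ u, P s u) * c - ((∑ u, ρ u * v u) - (∑ u, ρ u) * c) := by
      rw [Finset.sum_mul, Finset.sum_mul, ← Finset.sum_sub_distrib, ← Finset.sum_sub_distrib,
        ← Finset.sum_sub_distrib]
      exact Finset.sum_congr rfl fun u _ => by ring
    rw [e1, hP2, hρ1, hc]
    simp only [Matrix.mulVec, dotProduct]
    ring
  rw [key]
  calc |∑ u, (P s u - ρ u) * (v u - c)| ≤ ∑ u, |(P s u - ρ u) * (v u - c)| :=
        Finset.abs_sum_le_sum_abs _ _
    _ ≤ ∑ _u : S, ε * B := by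
        refine Finset.sum_le_sum fun u _ => ?_
        rw [abs_mul]
        exact mul_le_mul (hε u) (hB u) (abs_nonneg _) ((abs_nonneg _).trans (hε u))
    _ = (Fintype.card S : ℝ) * ε * B := by
        rw [Finset.sum_const, Finset.card_univ, nsmul_eq_mul, mul_assoc]

/-- **Proposition 1** (well-definedness of the relative value function): if the powers of the
row-stochastic matrix `Q` converge entrywise to the matrix all of whose rows equal `ρ`, then for
every vector `w` and state `s` the series of centered expected per-period rewards
`Σ_t [(A · Q^t · w)(s) − Σ_{s'} ρ(s') w(s')]` converges absolutely. -/
theorem stmt10 {S : Type*} [Fintype S] [DecidableEq S] [Nonempty S]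
    (A Q : Matrix S S ℝ) (hA : RowStochastic A) (hQ : RowStochastic Q)
    (ρ : S → ℝ)
    (hconv : Filter.Tendsto (fun t : ℕ => Q ^ t) Filter.atTop
      (nhds (Matrix.of fun _ s' => ρ s'))) :
    ∀ w : S → ℝ, ∀ s : S,
      Summable (fun t : ℕ => |((A * Q ^ t) *ᵥ w) s - ∑ s', ρ s' * w s'|) := by
  intro w s
  set c : ℝ := ∑ s', ρ s' * w s' with hcdef
  set u : ℕ → S → ℝ := fun t => (Q ^ t) *ᵥ w with hudef
  -- entrywise convergence
  have hentry : ∀ a e : S, Tendsto (fun t => (Q ^ t) a e) atTop (nhds (ρ e)) := fun a e =>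
    tendsto_pi_nhds.mp (tendsto_pi_nhds.mp hconv a) e
  have hρ1 : ∑ e, ρ e = 1 := by
    have h1 : Tendsto (fun t => ∑ e, (Q ^ t) (Classical.arbitrary S) e) atTop
        (nhds (∑ e, ρ e)) := tendsto_finset_sum _ fun e _ => hentry _ e
    have h2 : (fun t => ∑ e, (Q ^ t) (Classical.arbitrary S) e) = fun _ => (1 : ℝ) :=
      funext fun t => (rs_pow hQ t).2 _
    rw [h2] at h1
    exact tendsto_nhds_unique h1 tendsto_const_nhds
  -- invariance of ρ under Q
  have hinv : ∀ e, ∑ a, ρ a * Q a e = ρ e := by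
    intro e
    have h1 : Tendsto (fun t => (Q ^ (t + 1)) (Classical.arbitrary S) e) atTop (nhds (ρ e)) :=
      (hentry (Classical.arbitrary S) e).comp (tendsto_add_atTop_nat 1)
    have h2 : (fun t => (Q ^ (t + 1)) (Classical.arbitrary S) e)
        = fun t => ∑ a, (Q ^ t) (Classical.arbitrary S) a * Q a e :=
      funext fun t => by rw [pow_succ, Matrix.mul_apply]
    have h3 : Tendsto (fun t => ∑ a, (Q ^ t) (Classical.arbitrary S) a * Q a e) atTop
        (nhds (∑ a, ρ a * Q a e)) := tendsto_finset_sum _ fun a _ => (hentry _ a).mul_const _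
    rw [h2] at h1
    exact tendsto_nhds_unique h3 h1
  -- invariance of ρ under Q^t
  have hinvt : ∀ t e, ∑ a, ρ a * (Q ^ t) a e = ρ e := by
    intro t
    induction t with
    | zero => intro e; simp [Matrix.one_apply, mul_ite]
    | succ n ih =>
      intro e
      calc ∑ a, ρ a * (Q ^ (n + 1)) a e = ∑ a, ∑ x, ρ a * ((Q ^ n) a x * Q x e) := by
            simp [pow_succ, Matrix.mul_apply, Finset.mul_sum]
        _ = ∑ x, (∑ a, ρ a * (Q ^ n) a x) * Q x e := by
            rw [Finset.sum_comm]
            exact Finset.sum_congr rfl fun x _ => by rw [Finset.sum_mul]; exact Finset.sum_congr rfl fun _ _ => by ring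
        _ = ∑ x, ρ x * Q x e := by simp [ih]
        _ = ρ e := hinv e
  -- invariance of the centered mean
  have hcu : ∀ t, ∑ a, ρ a * u t a = c := by
    intro t
    calc ∑ a, ρ a * u t a = ∑ a, ∑ e, ρ a * ((Q ^ t) a e * w e) := by
          simp [hudef, Matrix.mulVec, dotProduct, Finset.mul_sum]
      _ = ∑ e, (∑ a, ρ a * (Q ^ t) a e) * w e := by
          rw [Finset.sum_comm]
          exact Finset.sum_congr rfl fun e _ => by rw [Finset.sum_mul]; exact Finset.sum_congr rfl fun _ _ => by ring
      _ = c := by simp [hinvt t, hcdef]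
  -- the sup of centered values
  set b : ℕ → ℝ := fun t => Finset.univ.sup' Finset.univ_nonempty fun a => |u t a - c| with hbdef
  have hb_mem : ∀ t a, |u t a - c| ≤ b t := fun t a =>
    Finset.le_sup' (fun a => |u t a - c|) (Finset.mem_univ a)
  have hb0 : ∀ t, 0 ≤ b t := fun t =>
    (abs_nonneg _).trans (hb_mem t (Classical.arbitrary S))
  have hu_add : ∀ t k : ℕ, u (k + t) = (Q ^ k) *ᵥ u t := by
    intro t k
    simp [hudef, pow_add, Matrix.mulVec_mulVec]
  have hmono : ∀ t k : ℕ, b (k + t) ≤ b t := by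
    intro t k
    apply Finset.sup'_le
    intro a _
    rw [hu_add t k]
    exact est1 (rs_pow hQ k) (u t) c (b t) (hb_mem t) a
  -- choose N with all entries of Q^N close to ρ
  have hcard : 0 < (Fintype.card S : ℝ) := by
    exact_mod_cast Fintype.card_pos
  set ε : ℝ := 1 / (2 * (Fintype.card S : ℝ)) with hεdef
  have hεpos : 0 < ε := by positivity
  have hev : ∀ᶠ t in atTop, ∀ a e : S, |(Q ^ t) a e - ρ e| ≤ ε := by
    refine Filter.eventually_all.2 fun a => Filter.eventually_all.2 fun e => ?_
    have hmem : Metric.closedBall (ρ e) ε ∈ nhds (ρ e) := Metric.closedBall_mem_nhds _ hεpos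
    filter_upwards [(hentry a e).eventually_mem hmem] with t ht
    simpa [Metric.mem_closedBall, Real.dist_eq] using ht
  obtain ⟨N0, hN0⟩ := eventually_atTop.mp hev
  set N : ℕ := N0 + 1 with hNdef
  have hNpos : 0 < N := Nat.succ_pos _
  have hNle : N0 ≤ N := Nat.le_succ _
  -- contraction
  have hcontr : ∀ t, b (N + t) ≤ b t / 2 := by
    intro t
    apply Finset.sup'_le
    intro a _
    rw [hu_add t N]
    calc |((Q ^ N) *ᵥ u t) a - c| ≤ (Fintype.card S : ℝ) * ε * b t :=
          est2 (Q ^ N) ρ (u t) c (b t) ε a ((rs_pow hQ N).2 a) hρ1 (hcu t) (hb_mem t) (hb0 t)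
            (fun e => hN0 N hNle a e)
      _ = b t / 2 := by
          rw [hεdef]
          field_simp
  -- geometric decay along multiples of N
  have hgeo : ∀ n : ℕ, b (N * n) ≤ b 0 * (1 / 2) ^ n := by
    intro n
    induction n with
    | zero => simp
    | succ m ih =>
      have h1 : N * (m + 1) = N + N * m := by ring
      rw [h1]
      calc b (N + N * m) ≤ b (N * m) / 2 := hcontr (N * m)
        _ ≤ (b 0 * (1 / 2) ^ m) / 2 := by linarith
        _ = b 0 * (1 / 2) ^ (m + 1) := by ring
  -- partial sums of b
  have hsum : ∀ n : ℕ, ∑ t ∈ Finset.range (N * n), b t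
      ≤ ∑ j ∈ Finset.range n, (N : ℝ) * (b 0 * (1 / 2) ^ j) := by
    intro n
    induction n with
    | zero => simp
    | succ m ih =>
      have hle : N * m ≤ N * (m + 1) := Nat.mul_le_mul_left N (Nat.le_succ m)
      have hsplit : ∑ t ∈ Finset.range (N * (m + 1)), b t
          = ∑ t ∈ Finset.range (N * m), b t + ∑ t ∈ Finset.Ico (N * m) (N * (m + 1)), b t := by
        simp only [Finset.range_eq_Ico]
        exact (Finset.sum_Ico_consecutive b (Nat.zero_le (N * m)) hle).symm
      have hblock : ∑ t ∈ Finset.Ico (N * m) (N * (m + 1)), b t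
          ≤ (N : ℝ) * (b 0 * (1 / 2) ^ m) := by
        calc ∑ t ∈ Finset.Ico (N * m) (N * (m + 1)), b t
            ≤ ∑ _t ∈ Finset.Ico (N * m) (N * (m + 1)), (b 0 * (1 / 2) ^ m) := by
              refine Finset.sum_le_sum fun t ht => ?_
              have ht1 : N * m ≤ t := (Finset.mem_Ico.mp ht).1
              have hbt : b t ≤ b (N * m) := by
                have := hmono (N * m) (t - N * m)
                rwa [Nat.sub_add_cancel ht1] at this
              exact hbt.trans (hgeo m)
          _ = (N : ℝ) * (b 0 * (1 / 2) ^ m) := by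
              rw [Finset.sum_const, Nat.card_Ico, nsmul_eq_mul]
              congr 1
              have : N * (m + 1) - N * m = N := by
                rw [Nat.mul_succ]
                omega
              rw [this]
      rw [hsplit, Finset.sum_range_succ]
      linarith
  -- comparison with the target series
  have hab : ∀ t, |((A * Q ^ t) *ᵥ w) s - c| ≤ b t := by
    intro t
    have h1 : (A * Q ^ t) *ᵥ w = A *ᵥ u t := by
      rw [hudef]
      simp [Matrix.mulVec_mulVec]
    rw [h1]
    exact est1 hA (u t) c (b t) (hb_mem t) s
  apply summable_of_sum_range_le (c := (N : ℝ) * b 0 * 2) (fun t => abs_nonneg _)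
  intro n
  have hgsum : ∑ j ∈ Finset.range n, (1 / 2 : ℝ) ^ j ≤ 2 := by
    have h1 : ∑ j ∈ Finset.range n, (1 / 2 : ℝ) ^ j ≤ ∑' j : ℕ, (1 / 2 : ℝ) ^ j :=
      Summable.sum_le_tsum _ (fun j _ => by positivity)
        (summable_geometric_of_lt_one (by norm_num) (by norm_num))
    have h2 : ∑' j : ℕ, (1 / 2 : ℝ) ^ j = 2 := by
      rw [tsum_geometric_of_lt_one (by norm_num) (by norm_num)]
      norm_num
    linarith
  calc ∑ t ∈ Finset.range n, |((A * Q ^ t) *ᵥ w) s - c|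
      ≤ ∑ t ∈ Finset.range n, b t := Finset.sum_le_sum fun t _ => hab t
    _ ≤ ∑ t ∈ Finset.range (N * n), b t := by
        refine Finset.sum_le_sum_of_subset_of_nonneg ?_ fun t _ _ => hb0 t
        exact Finset.range_subset_range.2 (Nat.le_mul_of_pos_left n hNpos)
    _ ≤ ∑ j ∈ Finset.range n, (N : ℝ) * (b 0 * (1 / 2) ^ j) := hsum n
    _ = (N : ℝ) * b 0 * ∑ j ∈ Finset.range n, (1 / 2 : ℝ) ^ j := by
        rw [Finset.mul_sum]
        exact Finset.sum_congr rfl fun j _ => by ring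
    _ ≤ (N : ℝ) * b 0 * 2 := by
        have hNb : 0 ≤ (N : ℝ) * b 0 := mul_nonneg (Nat.cast_nonneg N) (hb0 0)
        exact mul_le_mul_of_nonneg_left hgsum hNb
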